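/- Let M be a nonempty set equipped with a σ-algebra in which every singleton is measurable, and let f : M → M be a map such that for every y ∈ M the fiber f⁻¹({y}) has exactly k elements, where k ≥ 1 is a fixed integer. Equip M_f := { x : ℤ → M | f(x(n)) = x(n+1) for all n } with the trace of the product σ-algebra of M^ℤ, and let σ : M_f → M_f be the left shift (σx)(n) = x(n+1). Then there exists a measure ν^r on M_f such that: (1) ν^r({ y ∈ M_f : y(0) = x₀ }) = 1 for every x₀ ∈ M; and (2) ν^r(σ(A)) = ν^r(A)/k for every measurable set A ⊆ M_f. -/

import Mathlib

open MeasureTheory Set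
open scoped ENNReal

/-- The left shift on the space of orbits of `f`. -/
def orbitShift {M : Type*} (f : M → M)
    (x : {x : ℤ → M // ∀ n : ℤ, f (x n) = x (n + 1)}) :
    {x : ℤ → M // ∀ n : ℤ, f (x n) = x (n + 1)} :=
  ⟨fun n => x.1 (n + 1), fun n => x.2 (n + 1)⟩

namespace ExistsRMeasureAux

/-! ### Instances on `ZMod k` as a discrete measurable/topological group -/

instance (k : ℕ) : TopologicalSpace (ZMod k) := ⊥
instance (k : ℕ) : DiscreteTopology (ZMod k) := ⟨rfl⟩
instance (k : ℕ) : MeasurableSpace (ZMod k) := ⊤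
instance (k : ℕ) : MeasurableSingletonClass (ZMod k) :=
  ⟨fun _ => MeasurableSpace.measurableSet_top⟩
instance (k : ℕ) : BorelSpace (ZMod k) := ⟨borel_eq_top_of_discrete.symm⟩
instance (k : ℕ) : IsTopologicalAddGroup (ZMod k) :=
  { continuous_add := continuous_of_discreteTopology
    continuous_neg := continuous_of_discreteTopology }
instance (k : ℕ) [NeZero k] : MeasurableAdd (ZMod k) :=
  ⟨fun _ => measurable_of_countable _, fun _ => measurable_of_countable _⟩

/-- The code space: sequences of backward branch choices. -/
abbrev Code (k : ℕ) : Type := ℕ → ZMod k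

variable (k : ℕ) [NeZero k]

/-- The left shift on the code space. -/
def ctail (ω : Code k) : Code k := fun n => ω (n + 1)

/-- Prepending a letter to a code. -/
def ccons (j : ZMod k) (ω : Code k) : Code k :=
  fun n => match n with
  | 0 => j
  | (m + 1) => ω m

@[simp] lemma ccons_zero (j : ZMod k) (ω : Code k) : ccons k j ω 0 = j := rfl
@[simp] lemma ccons_succ (j : ZMod k) (ω : Code k) (m : ℕ) : ccons k j ω (m + 1) = ω m := rfl
@[simp] lemma ctail_apply (ω : Code k) (n : ℕ) : ctail k ω n = ω (n + 1) := rfl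

lemma measurable_ctail : Measurable (ctail k) :=
  measurable_pi_lambda _ fun n => measurable_pi_apply (n + 1)

lemma measurable_add_left (g : Code k) : Measurable (fun ω : Code k => g + ω) := by
  apply measurable_pi_lambda
  intro n
  have h : Measurable fun ω : Code k => ω n := measurable_pi_apply n
  exact h.const_add (g n)

/-- The uniform Bernoulli measure on the code space, as Haar measure. -/
noncomputable def B : Measure (Code k) :=
  Measure.addHaarMeasure (⊤ : TopologicalSpace.PositiveCompacts (Code k))

instance : IsProbabilityMeasure (B k) := by
  constructor
  have := Measure.addHaarMeasure_self
    (K₀ := (⊤ : TopologicalSpace.PositiveCompacts (Code k)))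
  simpa [B] using this

instance : (B k).IsAddLeftInvariant := by
  unfold B; infer_instance

instance : (B k).IsAddHaarMeasure := by
  unfold B; infer_instance

/-- The Bernoulli measure is invariant under the shift `ctail`. -/
lemma map_ctail : (B k).map (ctail k) = B k := by
  haveI : IsProbabilityMeasure ((B k).map (ctail k)) :=
    Measure.isProbabilityMeasure_map (measurable_ctail k).aemeasurable
  haveI : ((B k).map (ctail k)).IsAddLeftInvariant := by
    constructor
    intro g
    have h1 : Measurable (fun ω : Code k => g + ω) := measurable_add_left k g
    have h2 : Measurable (fun ω : Code k => ccons k 0 g + ω) :=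
      measurable_add_left k _
    rw [Measure.map_map h1 (measurable_ctail k)]
    have hcomp : (fun ω : Code k => g + ω) ∘ ctail k
        = ctail k ∘ (fun ω : Code k => ccons k 0 g + ω) := by
      funext ω; funext n; rfl
    rw [hcomp, ← Measure.map_map (measurable_ctail k) h2,
      MeasureTheory.map_add_left_eq_self (B k) (ccons k 0 g)]
  have h := Measure.isAddInvariant_eq_smul_of_compactSpace ((B k).map (ctail k)) (B k)
  have huniv := congrArg (fun μ : Measure (Code k) => μ univ) h
  simp only [measure_univ, Measure.smul_apply, ENNReal.smul_def, smul_eq_mul,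
    mul_one] at huniv
  have hc : ((B k).map (ctail k)).addHaarScalarFactor (B k) = 1 := by
    exact_mod_cast huniv.symm
  rw [h, hc, one_smul]

lemma B_preimage_ctail {S : Set (Code k)} (hS : MeasurableSet S) :
    B k (ctail k ⁻¹' S) = B k S := by
  conv_rhs => rw [← map_ctail k]
  rw [Measure.map_apply (measurable_ctail k) hS]

lemma measurable_cylSet (j : ZMod k) {S : Set (Code k)} (hS : MeasurableSet S) :
    MeasurableSet {ω : Code k | ω 0 = j ∧ ctail k ω ∈ S} := by
  have : {ω : Code k | ω 0 = j ∧ ctail k ω ∈ S}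
      = ((fun ω : Code k => ω 0) ⁻¹' {j}) ∩ (ctail k ⁻¹' S) := by
    rfl
  rw [this]
  exact ((measurable_pi_apply 0) (measurableSet_singleton j)).inter
    ((measurable_ctail k) hS)

/-- Key self-similarity: a cylinder over letter `j` followed by `S` has measure `B S / k`. -/
lemma B_cylSet (j : ZMod k) {S : Set (Code k)} (hS : MeasurableSet S) :
    B k {ω : Code k | ω 0 = j ∧ ctail k ω ∈ S} = B k S / k := by
  set C : ZMod k → Set (Code k) := fun i => {ω : Code k | ω 0 = i ∧ ctail k ω ∈ S} with hC
  have hmeas : ∀ i, MeasurableSet (C i) := fun i => measurable_cylSet k i hS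
  -- all the C i have the same measure, by translation invariance
  have heq : ∀ i, B k (C i) = B k (C j) := by
    intro i
    have hct : ∀ ω : Code k, ctail k (ccons k (i - j) 0 + ω) = ctail k ω := by
      intro ω; funext n
      show ccons k (i - j) 0 (n + 1) + ω (n + 1) = ω (n + 1)
      show (0 : ZMod k) + ω (n + 1) = ω (n + 1)
      exact zero_add _
    have hpre : (fun ω : Code k => ccons k (i - j) 0 + ω) ⁻¹' (C i) = C j := by
      ext ω
      simp only [hC, Set.mem_preimage, Set.mem_setOf_eq, hct]
      have hze : (ccons k (i - j) 0 + ω) 0 = (i - j) + ω 0 := rfl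
      rw [hze]
      constructor
      · rintro ⟨h1, h2⟩
        refine ⟨?_, h2⟩
        have : (i - j) + ω 0 = (i - j) + j := by rw [h1]; ring
        exact add_left_cancel this
      · rintro ⟨h1, h2⟩
        exact ⟨by rw [h1]; ring, h2⟩
    calc B k (C i) = B k ((fun ω : Code k => ccons k (i - j) 0 + ω) ⁻¹' (C i)) :=
          (measure_preimage_add (B k) _ (C i)).symm
      _ = B k (C j) := by rw [hpre]
  -- the C i partition ctail ⁻¹' S
  have hunion : (⋃ i, C i) = ctail k ⁻¹' S := by
    ext ω
    simp only [Set.mem_iUnion, hC, Set.mem_setOf_eq, Set.mem_preimage]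
    exact ⟨fun ⟨i, _, h⟩ => h, fun h => ⟨ω 0, rfl, h⟩⟩
  have hdisj : Pairwise (Function.onFun Disjoint C) := by
    intro i i' hne
    refine Set.disjoint_left.2 ?_
    rintro ω ⟨h1, -⟩ ⟨h2, -⟩
    exact hne (h1 ▸ h2 ▸ rfl)
  have hsum : ∑' i : ZMod k, B k (C i) = B k S := by
    rw [← measure_iUnion hdisj hmeas, hunion, B_preimage_ctail k hS]
  rw [tsum_fintype] at hsum
  have hcard : ∑ i : ZMod k, B k (C i) = (k : ℝ≥0∞) * B k (C j) := by
    rw [Finset.sum_congr rfl fun i _ => heq i, Finset.sum_const, Finset.card_univ,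
      ZMod.card, nsmul_eq_mul]
  rw [hcard] at hsum
  rw [ENNReal.eq_div_iff (by exact_mod_cast (NeZero.ne k)) (by simp), hsum]

/-! ### The orbit space construction -/

variable {M : Type*} [MeasurableSpace M] [MeasurableSingletonClass M]
variable (f : M → M) (e : M → ZMod k → M)

/-- The backward orbit determined by a starting point and a code. -/
def bwd (z : M) (ω : Code k) : ℕ → M
  | 0 => z
  | (m + 1) => e (bwd z ω m) (ω m)

/-- The full orbit determined by a starting point and a code. -/
def orbitOf (z : M) (ω : Code k) : ℤ → M :=
  fun n => if 0 ≤ n then f^[n.toNat] z else bwd k e z ω (-n).toNat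

lemma orbitOf_isOrbit (he : ∀ z j, f (e z j) = z) (z : M) (ω : Code k) :
    ∀ n : ℤ, f (orbitOf k f e z ω n) = orbitOf k f e z ω (n + 1) := by
  intro n
  rcases le_or_gt 0 n with hn | hn
  · have h1 : (0 : ℤ) ≤ n + 1 := by omega
    simp only [orbitOf, if_pos hn, if_pos h1]
    have h2 : (n + 1).toNat = n.toNat + 1 := by omega
    rw [h2, Function.iterate_succ_apply']
  · obtain ⟨m, hm⟩ : ∃ m, (-n).toNat = m + 1 := ⟨(-n).toNat - 1, by omega⟩
    simp only [orbitOf, if_neg (by omega : ¬ (0 : ℤ) ≤ n)]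
    rw [hm]
    show f (e (bwd k e z ω m) (ω m)) = _
    rw [he]
    rcases eq_or_lt_of_le (by omega : n + 1 ≤ 0) with h0 | h0
    · have hm0 : m = 0 := by omega
      rw [if_pos (le_of_eq h0.symm)]
      have : (n + 1).toNat = 0 := by omega
      rw [this, Function.iterate_zero_apply, hm0]
      rfl
    · rw [if_neg (by omega : ¬ (0 : ℤ) ≤ n + 1)]
      have : (-(n + 1)).toNat = m := by omega
      rw [this]

variable (he : ∀ z j, f (e z j) = z)

/-- The map from codes to orbits with prescribed position at time `0`. -/
def Phi (z : M) (ω : Code k) : {x : ℤ → M // ∀ n : ℤ, f (x n) = x (n + 1)} :=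
  ⟨orbitOf k f e z ω, orbitOf_isOrbit k f e he z ω⟩

@[simp] lemma Phi_zero (z : M) (ω : Code k) : (Phi k f e he z ω).1 0 = z := rfl

lemma bwd_eq_of_agree (z : M) {m : ℕ} {ω ω' : Code k} (h : ∀ i < m, ω i = ω' i) :
    bwd k e z ω m = bwd k e z ω' m := by
  induction m with
  | zero => rfl
  | succ m ih =>
    show e (bwd k e z ω m) (ω m) = e (bwd k e z ω' m) (ω' m)
    rw [ih fun i hi => h i (by omega), h m (by omega)]

lemma measurable_bwd (z : M) (m : ℕ) : Measurable (fun ω : Code k => bwd k e z ω m) := by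
  classical
  set F : (Fin m → ZMod k) → M :=
    fun v => bwd k e z (fun n => if h : n < m then v ⟨n, h⟩ else 0) m with hF
  have hfac : (fun ω : Code k => bwd k e z ω m)
      = F ∘ (fun ω : Code k => fun i : Fin m => ω i.1) := by
    funext ω
    show bwd k e z ω m = F (fun i : Fin m => ω i.1)
    have h1 : bwd k e z ω m
        = bwd k e z (fun n => if h : n < m then ω n else 0) m :=
      bwd_eq_of_agree k e z (fun i hi => by rw [dif_pos hi])
    exact h1
  rw [hfac]
  exact (measurable_of_countable F).comp
    (measurable_pi_lambda _ fun i => measurable_pi_apply i.1)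

lemma measurable_Phi (z : M) : Measurable (Phi k f e he z) := by
  apply Measurable.subtype_mk
  apply measurable_pi_lambda
  intro n
  rcases le_or_gt 0 n with hn | hn
  · have : (fun ω : Code k => orbitOf k f e z ω n) = fun _ => f^[n.toNat] z := by
      funext ω; simp [orbitOf, hn]
    rw [this]; exact measurable_const
  · have : (fun ω : Code k => orbitOf k f e z ω n)
        = fun ω => bwd k e z ω (-n).toNat := by
      funext ω; simp [orbitOf, not_le.2 hn]
    rw [this]; exact measurable_bwd k e z _

/-- Conjugation identity: shifting the orbit of `(e z (ω 0), ctail ω)` gives the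
orbit of `(z, ω)`. -/
lemma shift_Phi (z : M) (ω : Code k) :
    orbitShift f (Phi k f e he (e z (ω 0)) (ctail k ω)) = Phi k f e he z ω := by
  have hbwd : ∀ m : ℕ, bwd k e (e z (ω 0)) (ctail k ω) m = bwd k e z ω (m + 1) := by
    intro m
    induction m with
    | zero => rfl
    | succ m ih =>
      show e (bwd k e (e z (ω 0)) (ctail k ω) m) (ctail k ω m) = _
      rw [ih]
      rfl
  apply Subtype.ext
  funext n
  show orbitOf k f e (e z (ω 0)) (ctail k ω) (n + 1) = orbitOf k f e z ω n
  rcases le_or_gt 0 n with hn | hn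
  · have h1 : (0 : ℤ) ≤ n + 1 := by omega
    simp only [orbitOf, if_pos hn, if_pos h1]
    have h2 : (n + 1).toNat = n.toNat + 1 := by omega
    rw [h2, Function.iterate_succ_apply, he]
  · rcases eq_or_lt_of_le (by omega : n + 1 ≤ 0) with h0 | h0
    · have hn1 : n = -1 := by omega
      subst hn1
      show orbitOf k f e (e z (ω 0)) (ctail k ω) 0 = orbitOf k f e z ω (-1)
      simp only [orbitOf, if_pos (le_refl (0 : ℤ)),
        if_neg (by omega : ¬ (0 : ℤ) ≤ (-1 : ℤ))]
      show f^[(0 : ℤ).toNat] (e z (ω 0)) = bwd k e z ω ((1 : ℤ)).toNat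
      simp only [Int.toNat_zero, Function.iterate_zero_apply, Int.toNat_one]
      rfl
    · simp only [orbitOf, if_neg (by omega : ¬ (0 : ℤ) ≤ n + 1),
        if_neg (by omega : ¬ (0 : ℤ) ≤ n)]
      have h2 : (-n).toNat = (-(n + 1)).toNat + 1 := by omega
      rw [h2, ← hbwd]

end ExistsRMeasureAux

open ExistsRMeasureAux

/-- if every fiber of `f` has exactly `k ≥ 1` elements, then on the
space of orbits `M_f` (with the trace of the product σ-algebra) there is a measure
`ν^r` giving each fiber `π⁻¹(x₀)` measure `1` and satisfying
`ν^r (σ(A)) = ν^r(A) / k` for every measurable `A`. -/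
theorem exists_r_measure {M : Type*} [Nonempty M] [MeasurableSpace M]
    [MeasurableSingletonClass M] (f : M → M)
    (k : ℕ) (hk : 1 ≤ k)
    (hfib : ∀ y : M, (f ⁻¹' {y}).ncard = k) :
    ∃ ν : Measure {x : ℤ → M // ∀ n : ℤ, f (x n) = x (n + 1)},
      (∀ x₀ : M, ν {y | y.1 0 = x₀} = 1) ∧
      (∀ A : Set {x : ℤ → M // ∀ n : ℤ, f (x n) = x (n + 1)},
        MeasurableSet A → ν (orbitShift f '' A) = ν A / k) := by
  classical
  haveI : NeZero k := ⟨by omega⟩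
  -- enumerate each fiber of `f` by `ZMod k`
  have hE : ∀ y : M, Nonempty (ZMod k ≃ (f ⁻¹' {y} : Set M)) := by
    intro y
    have hfin : (f ⁻¹' {y}).Finite :=
      Set.finite_of_ncard_ne_zero (by rw [hfib y]; omega)
    haveI : Finite (f ⁻¹' {y} : Set M) := hfin
    have hcard : Nat.card (f ⁻¹' {y} : Set M) = k := by
      rw [Nat.card_coe_set_eq, hfib y]
    have hzc : Nat.card (ZMod k) = k := by
      rw [Nat.card_eq_fintype_card, ZMod.card]
    exact ⟨(Finite.equivFinOfCardEq hzc).trans (Finite.equivFinOfCardEq hcard).symm⟩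
  set E : ∀ y : M, ZMod k ≃ (f ⁻¹' {y} : Set M) := fun y => (hE y).some with hEdef
  set e : M → ZMod k → M := fun y j => (E y j : M) with hedef
  have he : ∀ z j, f (e z j) = z := fun z j => (E z j).2
  -- the reindexing bijection `M × ZMod k ≃ M`
  have hbij : Function.Bijective (fun p : M × ZMod k => e p.1 p.2) := by
    constructor
    · rintro ⟨z, j⟩ ⟨z', j'⟩ hzz
      simp only at hzz
      have hz : z = z' := by rw [← he z j, ← he z' j', hzz]
      subst hz
      have : (E z j : M) = (E z j' : M) := hzz
      have h2 : E z j = E z j' := Subtype.ext this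
      simpa using congrArg (E z).symm h2
    · intro w
      refine ⟨⟨f w, (E (f w)).symm ⟨w, rfl⟩⟩, ?_⟩
      show ((E (f w)) ((E (f w)).symm ⟨w, rfl⟩) : M) = w
      rw [Equiv.apply_symm_apply]
  let η : M × ZMod k ≃ M := Equiv.ofBijective _ hbij
  have hη : ∀ p : M × ZMod k, η p = e p.1 p.2 := fun p => rfl
  -- the measure
  set Ω := {x : ℤ → M // ∀ n : ℤ, f (x n) = x (n + 1)} with hΩ
  set ν : Measure Ω := Measure.sum (fun z : M => (B k).map (Phi k f e he z)) with hν
  have hΦm : ∀ z : M, Measurable (Phi k f e he z) := fun z => measurable_Phi k f e he z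
  have hν_apply : ∀ {S : Set Ω}, MeasurableSet S →
      ν S = ∑' z : M, B k (Phi k f e he z ⁻¹' S) := by
    intro S hS
    rw [hν, Measure.sum_apply _ hS]
    congr 1
    funext z
    rw [Measure.map_apply (hΦm z) hS]
  refine ⟨ν, ?_, ?_⟩
  · -- each fiber has measure 1
    intro x₀
    have hS : MeasurableSet {y : Ω | y.1 0 = x₀} := by
      have : {y : Ω | y.1 0 = x₀}
          = (fun y : Ω => y.1 0) ⁻¹' {x₀} := rfl
      rw [this]
      exact ((measurable_pi_apply 0).comp measurable_subtype_coe)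
        (measurableSet_singleton x₀)
    rw [hν_apply hS]
    have hpre : ∀ z : M, (Phi k f e he z ⁻¹' {y : Ω | y.1 0 = x₀})
        = if z = x₀ then univ else ∅ := by
      intro z
      split_ifs with h
      · subst h
        ext ω
        exact iff_of_true (Phi_zero k f e he z ω) trivial
      · ext ω
        simp only [Set.mem_preimage, Set.mem_setOf_eq, Phi_zero, Set.mem_empty_iff_false,
          iff_false]
        exact h
    calc ∑' z : M, B k (Phi k f e he z ⁻¹' {y : Ω | y.1 0 = x₀})
        = ∑' z : M, if z = x₀ then (1 : ℝ≥0∞) else 0 := by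
          congr 1; funext z; rw [hpre z]; split_ifs <;> simp
      _ = 1 := tsum_ite_eq x₀ 1
  · -- the shift identity
    intro A hA
    -- the shift as an equiv with measurable inverse
    set σinv : Ω → Ω := fun x =>
      ⟨fun n => x.1 (n - 1), fun n => by
        rw [x.2 (n - 1)]; congr 1; ring⟩ with hσinv
    have hσinv_meas : Measurable σinv := by
      apply Measurable.subtype_mk
      apply measurable_pi_lambda
      intro n
      exact (measurable_pi_apply (n - 1)).comp measurable_subtype_coe
    have hlr : ∀ x : Ω, σinv (orbitShift f x) = x := by
      intro x; apply Subtype.ext; funext n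
      show x.1 ((n - 1) + 1) = x.1 n
      congr 1; ring
    have hrl : ∀ x : Ω, orbitShift f (σinv x) = x := by
      intro x; apply Subtype.ext; funext n
      show x.1 ((n + 1) - 1) = x.1 n
      congr 1; ring
    have himg : orbitShift f '' A = σinv ⁻¹' A := by
      ext x
      constructor
      · rintro ⟨a, ha, rfl⟩
        show σinv (orbitShift f a) ∈ A
        rw [hlr a]; exact ha
      · intro hx
        exact ⟨σinv x, hx, hrl x⟩
    have hAimg : MeasurableSet (orbitShift f '' A) := by
      rw [himg]; exact hσinv_meas hA
    have hinj : Function.Injective (orbitShift f) :=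
      Function.LeftInverse.injective hlr
    -- key preimage decomposition
    have hdecomp : ∀ z : M, (Phi k f e he z ⁻¹' (orbitShift f '' A))
        = ⋃ j : ZMod k,
          {ω : Code k | ω 0 = j ∧ ctail k ω ∈ (Phi k f e he (e z j) ⁻¹' A)} := by
      intro z
      ext ω
      simp only [Set.mem_preimage, Set.mem_iUnion, Set.mem_setOf_eq]
      constructor
      · rintro ⟨a, ha, haeq⟩
        refine ⟨ω 0, rfl, ?_⟩
        show Phi k f e he (e z (ω 0)) (ctail k ω) ∈ A
        have : orbitShift f (Phi k f e he (e z (ω 0)) (ctail k ω))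
            = orbitShift f a := by
          rw [shift_Phi, haeq]
        rw [hinj this]
        exact ha
      · rintro ⟨j, rfl, hmem⟩
        exact ⟨Phi k f e he (e z (ω 0)) (ctail k ω), hmem, shift_Phi k f e he z ω⟩
    -- measure of each decomposed piece
    have hpiece : ∀ z : M, B k (Phi k f e he z ⁻¹' (orbitShift f '' A))
        = ∑' j : ZMod k, B k (Phi k f e he (e z j) ⁻¹' A) / k := by
      intro z
      rw [hdecomp z]
      have hdisj2 : Pairwise (Function.onFun Disjoint (fun j : ZMod k =>
          {ω : Code k | ω 0 = j ∧ ctail k ω ∈ (Phi k f e he (e z j) ⁻¹' A)})) := by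
        intro i i' hne
        refine Set.disjoint_left.2 ?_
        rintro ω ⟨h1, -⟩ ⟨h2, -⟩
        exact hne (h1 ▸ h2 ▸ rfl)
      have hmeas2 : ∀ j : ZMod k, MeasurableSet
          {ω : Code k | ω 0 = j ∧ ctail k ω ∈ (Phi k f e he (e z j) ⁻¹' A)} :=
        fun j => measurable_cylSet k j (hΦm (e z j) hA)
      rw [measure_iUnion hdisj2 hmeas2]
      congr 1
      funext j
      exact B_cylSet k j (hΦm (e z j) hA)
    -- put everything together
    rw [hν_apply hAimg, hν_apply hA]
    calc ∑' z : M, B k (Phi k f e he z ⁻¹' (orbitShift f '' A))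
        = ∑' z : M, ∑' j : ZMod k, B k (Phi k f e he (e z j) ⁻¹' A) / k := by
          congr 1; funext z; exact hpiece z
      _ = ∑' p : M × ZMod k, B k (Phi k f e he (e p.1 p.2) ⁻¹' A) / k :=
          (ENNReal.tsum_prod (f := fun z j => B k (Phi k f e he (e z j) ⁻¹' A) / k)).symm
      _ = ∑' w : M, B k (Phi k f e he w ⁻¹' A) / k :=
          η.tsum_eq (fun w : M => B k (Phi k f e he w ⁻¹' A) / k)
      _ = (∑' w : M, B k (Phi k f e he w ⁻¹' A)) / k := by
          simp only [div_eq_mul_inv]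
          exact ENNReal.tsum_mul_right
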